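/- arXiv:2201.13450 — 2 statements merged into one kernel-verified Lean document; each statement's English description precedes it below -/
import Mathlib

section
/- Let q, n, s be positive integers with 2s ≤ q, and let C = {x ∈ (ZMod q)^n : each coordinate of x has a representative in {−s+1, …, s}} be the discrete cube of side length 2s centered at 0. For Δ ∈ (ZMod q)^n, the number of points in C ∩ (C + Δ) is at least (2s − ‖Δ‖_q)^n when ‖Δ‖_q ≤ 2s, where ‖Δ‖_q is the modular Euclidean norm. -/
/-- The modular norm on `(ZMod q)^n`: the infimum of the Euclidean norms of integer lifts. -/
noncomputable def modNorm (q n : ℕ) (y : Fin n → ZMod q) : ℝ :=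
  sInf {r : ℝ | ∃ a : Fin n → ℤ, (∀ i, ((a i : ZMod q) = y i)) ∧
    r = Real.sqrt (∑ i, ((a i : ℝ)) ^ 2)}

/-- The zero-centered discrete cube of side length `2s` in `(ZMod q)^n`. -/
def cubeSet (q n : ℕ) (s : ℕ) : Set (Fin n → ZMod q) :=
  {x | ∀ i, ∃ a : ℤ, ((a : ZMod q) = x i) ∧ -(s : ℤ) + 1 ≤ a ∧ a ≤ s}

/-- Per-coordinate minimality of the centered representative. -/
lemma abs_min_lift (q : ℕ) (hq : 0 < q) (x : ZMod q) (a : ℤ)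
    (ha : (a : ZMod q) = x) :
    letI d : ℤ := if 2 * x.val ≤ q then (x.val : ℤ) else (x.val : ℤ) - q
    d ^ 2 ≤ a ^ 2 := by
  haveI : NeZero q := ⟨hq.ne'⟩
  set d : ℤ := if 2 * x.val ≤ q then (x.val : ℤ) else (x.val : ℤ) - q with hd
  have hdx : (d : ZMod q) = x := by
    rw [hd]
    split <;> push_cast <;> simp [ZMod.natCast_val, ZMod.intCast_cast]
  have hvlt : x.val < q := ZMod.val_lt x
  have habs : 2 * |d| ≤ q := by
    rw [hd]
    rcases le_or_gt (2 * x.val) q with h | h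
    · rw [if_pos h, abs_of_nonneg (Int.natCast_nonneg _)]; omega
    · rw [if_neg (by omega), abs_of_nonpos (by omega)]; omega
  have hdvd : (q : ℤ) ∣ a - d := by
    have : ((a - d : ℤ) : ZMod q) = 0 := by push_cast [ha, hdx]; ring
    exact (ZMod.intCast_zmod_eq_zero_iff_dvd _ _).mp this
  obtain ⟨k, hk⟩ := hdvd
  have ha' : a = d + q * k := by omega
  rcases lt_trichotomy k 0 with hk0 | hk0 | hk0
  · have h1 : (q : ℤ) * k ≤ -q := by nlinarith
    nlinarith [abs_le.mp (le_refl |d|), neg_abs_le d, le_abs_self d]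
  · simp [ha', hk0]
  · have h1 : (q : ℤ) ≤ q * k := by nlinarith
    nlinarith [neg_abs_le d, le_abs_self d]

/-- The overlap of a cube with its shift by `Δ` contains at least `(2s - ‖Δ‖_q)^n` points,
provided `‖Δ‖_q ≤ 2s`. -/
theorem stmt_10 (q n s : ℕ) (hq : 0 < q) (hn : 0 < n) (hs : 0 < s) (hsq : 2 * s ≤ q)
    (Δ : Fin n → ZMod q) (hΔ : modNorm q n Δ ≤ 2 * s) :
    ((2 * (s : ℝ) - modNorm q n Δ) ^ n : ℝ) ≤
      Nat.card ↥(cubeSet q n s ∩ ((· + Δ) '' cubeSet q n s)) := by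
  haveI : NeZero q := ⟨hq.ne'⟩
  classical
  set d : Fin n → ℤ := fun i =>
    if 2 * (Δ i).val ≤ q then ((Δ i).val : ℤ) else ((Δ i).val : ℤ) - q with hd
  have hdΔ : ∀ i, ((d i : ZMod q) = Δ i) := by
    intro i
    rw [hd]; dsimp only
    split <;> push_cast <;> simp [ZMod.natCast_val, ZMod.intCast_cast]
  have hmin : ∀ i, ∀ a : ℤ, ((a : ZMod q) = Δ i) → d i ^ 2 ≤ a ^ 2 := by
    intro i a ha
    exact abs_min_lift q hq (Δ i) a ha
  set S := {r : ℝ | ∃ a : Fin n → ℤ, (∀ i, ((a i : ZMod q) = Δ i)) ∧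
    r = Real.sqrt (∑ i, ((a i : ℝ)) ^ 2)} with hS
  have hmem : Real.sqrt (∑ i, ((d i : ℝ)) ^ 2) ∈ S := ⟨d, hdΔ, rfl⟩
  have hbdd : BddBelow S := ⟨0, fun r hr => by obtain ⟨a, _, rfl⟩ := hr; positivity⟩
  have hnorm : modNorm q n Δ = Real.sqrt (∑ i, ((d i : ℝ)) ^ 2) := by
    apply le_antisymm (csInf_le hbdd hmem)
    apply le_csInf ⟨_, hmem⟩
    rintro r ⟨a, ha, rfl⟩
    apply Real.sqrt_le_sqrt
    apply Finset.sum_le_sum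
    intro i _
    exact_mod_cast hmin i (a i) (ha i)
  have habs_le : ∀ i, (|d i| : ℝ) ≤ modNorm q n Δ := by
    intro i
    rw [hnorm]
    rw [show (|d i| : ℝ) = Real.sqrt ((d i : ℝ) ^ 2) by
      rw [Real.sqrt_sq_eq_abs]]
    apply Real.sqrt_le_sqrt
    exact Finset.single_le_sum (f := fun i => ((d i : ℝ)) ^ 2)
      (fun j _ => by positivity) (Finset.mem_univ i)
  have habs2s : ∀ i, |d i| ≤ (2 * s : ℤ) := by
    intro i
    have := (habs_le i).trans hΔ
    exact_mod_cast this
  -- the box of integer lifts of points in the intersection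
  set lo : Fin n → ℤ := fun i => -(s : ℤ) + 1 + max (d i) 0 with hlo
  set hi : Fin n → ℤ := fun i => (s : ℤ) + min (d i) 0 with hhi
  set F : Finset (Fin n → ℤ) := Fintype.piFinset (fun i => Finset.Icc (lo i) (hi i)) with hF
  set f : (Fin n → ℤ) → (Fin n → ZMod q) := fun a i => (a i : ZMod q) with hf
  have hmemF : ∀ a ∈ F, ∀ i, lo i ≤ a i ∧ a i ≤ hi i := by
    intro a ha i
    have := (Fintype.mem_piFinset.mp ha) i
    exact Finset.mem_Icc.mp this
  have hinj : Set.InjOn f ↑F := by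
    intro a ha b hb hab
    funext i
    have h1 : ((a i - b i : ℤ) : ZMod q) = 0 := by
      have := congrFun hab i
      simp only [hf] at this
      push_cast [this]; ring
    have hdvd : (q : ℤ) ∣ a i - b i := (ZMod.intCast_zmod_eq_zero_iff_dvd _ _).mp h1
    have ha' := hmemF a ha i
    have hb' := hmemF b hb i
    have hlh : hi i - lo i < q := by
      rw [hlo, hhi]; dsimp only
      have h2 := habs2s i
      rcases le_total (d i) 0 with h | h
      · rw [max_eq_right h, min_eq_left h]; rw [abs_of_nonpos h] at h2; omega
      · rw [max_eq_left h, min_eq_right h]; rw [abs_of_nonneg h] at h2; omega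
    have : a i - b i = 0 := Int.eq_zero_of_abs_lt_dvd hdvd (by
      rw [abs_lt]; omega)
    omega
  set T : Set (Fin n → ZMod q) := cubeSet q n s ∩ ((· + Δ) '' cubeSet q n s) with hT
  have hsub : ↑(F.image f) ⊆ T := by
    intro x hx
    simp only [Finset.coe_image, Set.mem_image] at hx
    obtain ⟨a, ha, rfl⟩ := hx
    have ha' := hmemF a ha
    constructor
    · intro i
      refine ⟨a i, rfl, ?_, ?_⟩
      · have := (ha' i).1
        rw [hlo] at this; dsimp only at this
        have := le_max_right (d i) 0
        omega
      · have := (ha' i).2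
        rw [hhi] at this; dsimp only at this
        have := min_le_right (d i) 0
        omega
    · refine ⟨fun i => ((a i - d i : ℤ) : ZMod q), ?_, ?_⟩
      · intro i
        refine ⟨a i - d i, rfl, ?_, ?_⟩
        · have := (ha' i).1
          rw [hlo] at this; dsimp only at this
          have := le_max_left (d i) 0
          omega
        · have := (ha' i).2
          rw [hhi] at this; dsimp only at this
          have := min_le_left (d i) 0
          omega
      · funext i
        simp only [hf, Pi.add_apply]
        rw [← hdΔ i]
        push_cast
        ring
  have hfin : T.Finite := Set.toFinite T
  have hcard : F.card ≤ Nat.card ↥T := by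
    rw [Nat.card_coe_set_eq]
    calc F.card = (F.image f).card := (Finset.card_image_of_injOn hinj).symm
    _ = (↑(F.image f) : Set _).ncard := (Set.ncard_coe_finset _).symm
    _ ≤ T.ncard := Set.ncard_le_ncard hsub hfin
  have hFcard : F.card = ∏ i, (hi i + 1 - lo i).toNat := by
    rw [hF, Fintype.card_piFinset]
    exact Finset.prod_congr rfl fun i _ => Int.card_Icc _ _
  have hlen : ∀ i, hi i + 1 - lo i = 2 * s - |d i| := by
    intro i
    rw [hlo, hhi]; dsimp only
    rcases le_total (d i) 0 with h | h
    · rw [max_eq_right h, min_eq_left h, abs_of_nonpos h]; ring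
    · rw [max_eq_left h, min_eq_right h, abs_of_nonneg h]; ring
  have key : ((2 * (s : ℝ) - modNorm q n Δ) ^ n : ℝ) ≤ (F.card : ℝ) := by
    rw [hFcard]
    push_cast
    rw [show ((2 * (s : ℝ) - modNorm q n Δ) ^ n : ℝ)
        = ∏ _i : Fin n, (2 * (s : ℝ) - modNorm q n Δ) by
      rw [Finset.prod_const, Finset.card_univ, Fintype.card_fin]]
    apply Finset.prod_le_prod
    · intro i _
      linarith
    · intro i _
      have h1 := hlen i
      have h2 := habs2s i
      have h3 := habs_le i
      push_cast at h3
      have h4 : (((hi i + 1 - lo i).toNat : ℕ) : ℝ) = 2 * (s : ℝ) - |((d i : ℝ))| := by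
        calc (((hi i + 1 - lo i).toNat : ℕ) : ℝ)
            = (((hi i + 1 - lo i).toNat : ℤ) : ℝ) := by push_cast; ring
        _ = ((2 * (s : ℤ) - |d i| : ℤ) : ℝ) := by rw [Int.toNat_of_nonneg (by omega), h1]
        _ = 2 * (s : ℝ) - |((d i : ℝ))| := by push_cast; ring
      rw [h4]
      linarith
  calc ((2 * (s : ℝ) - modNorm q n Δ) ^ n : ℝ) ≤ (F.card : ℝ) := key
  _ ≤ (Nat.card ↥T : ℝ) := by exact_mod_cast hcard
end

section
/- Let r₁, …, r_n be positive reals, R ⊆ {1,…,n} a subset, and positive reals v₁, …, v_n satisfying: (a) v₁···v_n ≥ (∏_{j∉R} r_j) (i.e., the product r₁···r_n / ∏_{j∈R} r_j is at most v₁···v_n), (b) v₁···v_i ≤ r₁···r_i for all i, and (c) v_{i+1}···v_n ≤ r_{i+1}···r_n for all i. Then for all 1 ≤ m ≤ i ≤ n: r_{i−m+1}···r_i / ∏_{j∈R} r_j ≤ v_{i−m+1}···v_i. -/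
/-- Product-telescoping inequality from the analysis of LLL on rectangle-periodic lattices:
under (a) `∏_{j∉R} r_j ≤ ∏_j v_j`, (b) `∏_{j≤i} v_j ≤ ∏_{j≤i} r_j`, and
(c) `∏_{j>i} v_j ≤ ∏_{j>i} r_j`, one has
`(∏_{j=i-m+1}^{i} r_j) / ∏_{j∈R} r_j ≤ ∏_{j=i-m+1}^{i} v_j` for all `1 ≤ m ≤ i ≤ n`. -/
theorem stmt_19 (n : ℕ) (r v : ℕ → ℝ) (R : Finset ℕ) (hR : R ⊆ Finset.Icc 1 n)
    (hrpos : ∀ i ∈ Finset.Icc 1 n, 0 < r i)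
    (hvpos : ∀ i ∈ Finset.Icc 1 n, 0 < v i)
    (ha : (∏ j ∈ (Finset.Icc 1 n) \ R, r j) ≤ ∏ j ∈ Finset.Icc 1 n, v j)
    (hb : ∀ i ≤ n, (∏ j ∈ Finset.Icc 1 i, v j) ≤ ∏ j ∈ Finset.Icc 1 i, r j)
    (hc : ∀ i ≤ n, (∏ j ∈ Finset.Icc (i + 1) n, v j) ≤ ∏ j ∈ Finset.Icc (i + 1) n, r j) :
    ∀ m i, 1 ≤ m → m ≤ i → i ≤ n →
      (∏ j ∈ Finset.Icc (i - m + 1) i, r j) / (∏ j ∈ R, r j) ≤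
        ∏ j ∈ Finset.Icc (i - m + 1) i, v j := by
  intro m i hm hmi hin
  have him : i - m ≤ i := Nat.sub_le _ _
  have himn : i - m ≤ n := le_trans him hin
  -- rewrite Icc as Ioc
  have key : ∀ f : ℕ → ℝ, ∀ a b : ℕ, ∏ j ∈ Finset.Icc (a + 1) b, f j = ∏ j ∈ Finset.Ioc a b, f j := by
    intro f a b; rw [← Finset.Icc_add_one_left_eq_Ioc]
  have h1n : ∀ f : ℕ → ℝ, ∏ j ∈ Finset.Icc 1 n, f j = ∏ j ∈ Finset.Ioc 0 n, f j := by
    intro f; exact key f 0 n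
  -- splittings
  have splitr : (∏ j ∈ Finset.Ioc 0 (i - m), r j) * (∏ j ∈ Finset.Ioc (i - m) i, r j)
      * (∏ j ∈ Finset.Ioc i n, r j) = ∏ j ∈ Finset.Ioc 0 n, r j := by
    rw [Finset.prod_Ioc_consecutive _ (Nat.zero_le _) him,
        Finset.prod_Ioc_consecutive _ (Nat.zero_le _) hin]
  have splitv : (∏ j ∈ Finset.Ioc 0 (i - m), v j) * (∏ j ∈ Finset.Ioc (i - m) i, v j)
      * (∏ j ∈ Finset.Ioc i n, v j) = ∏ j ∈ Finset.Ioc 0 n, v j := by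
    rw [Finset.prod_Ioc_consecutive _ (Nat.zero_le _) him,
        Finset.prod_Ioc_consecutive _ (Nat.zero_le _) hin]
  have sdiffr : (∏ j ∈ (Finset.Icc 1 n) \ R, r j) * (∏ j ∈ R, r j)
      = ∏ j ∈ Finset.Icc 1 n, r j := Finset.prod_sdiff hR
  -- positivity
  have posIoc : ∀ (f : ℕ → ℝ), (∀ j ∈ Finset.Icc 1 n, 0 < f j) → ∀ a b : ℕ, b ≤ n →
      0 < ∏ j ∈ Finset.Ioc a b, f j := by
    intro f hf a b hb'
    apply Finset.prod_pos
    intro j hj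
    rw [Finset.mem_Ioc] at hj
    exact hf j (Finset.mem_Icc.mpr ⟨Nat.one_le_iff_ne_zero.mpr (by omega), le_trans hj.2 hb'⟩)
  have p1r := posIoc r hrpos 0 (i - m) himn
  have p2r := posIoc r hrpos (i - m) i hin
  have p3r := posIoc r hrpos i n le_rfl
  have p2v := posIoc v hvpos (i - m) i hin
  have pR : 0 < ∏ j ∈ R, r j := Finset.prod_pos fun j hj => hrpos j (hR hj)
  have pS : 0 < ∏ j ∈ (Finset.Icc 1 n) \ R, r j :=
    Finset.prod_pos fun j hj => hrpos j (Finset.mem_sdiff.mp hj).1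
  -- bounds
  have hb' : (∏ j ∈ Finset.Ioc 0 (i - m), v j) ≤ ∏ j ∈ Finset.Ioc 0 (i - m), r j := by
    have := hb (i - m) himn
    rwa [key v 0 (i - m), key r 0 (i - m)] at this
  have hc' : (∏ j ∈ Finset.Ioc i n, v j) ≤ ∏ j ∈ Finset.Ioc i n, r j := by
    have := hc i hin
    rwa [key v i n, key r i n] at this
  have p1v : 0 < ∏ j ∈ Finset.Ioc 0 (i - m), v j := posIoc v hvpos 0 (i - m) himn
  have p3v : 0 < ∏ j ∈ Finset.Ioc i n, v j := posIoc v hvpos i n le_rfl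
  have ha' : (∏ j ∈ (Finset.Icc 1 n) \ R, r j) ≤
      (∏ j ∈ Finset.Ioc 0 (i - m), v j) * (∏ j ∈ Finset.Ioc (i - m) i, v j)
      * (∏ j ∈ Finset.Ioc i n, v j) := by
    rw [splitv, ← h1n v]; exact ha
  -- combine
  rw [key r (i - m) i, key v (i - m) i, div_le_iff₀ pR]
  rw [h1n r, ← splitr] at sdiffr
  nlinarith [mul_le_mul hb' (mul_le_mul_of_nonneg_left hc' p2v.le) (by positivity) p1r.le,
    mul_le_mul_of_nonneg_left ha' pR.le, mul_pos p1r p3r]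
end
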